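/- The content vector determines the standard tableau: if T and S are standard Young tableaux (possibly of different shapes) of size d with a_k(T) = a_k(S) for all 1 ≤ k ≤ d, then T = S (in particular they have the same shape). -/

import Mathlib

/-- A filling `T : μ.cells ≃ Fin d` of a Young diagram is standard if its entries increase
along each row and along each column. -/
def IsStandardFilling {μ : YoungDiagram} {d : ℕ} (T : ↥μ.cells ≃ Fin d) : Prop :=
  ∀ a b : ↥μ.cells,
    (((a : ℕ × ℕ).1 = (b : ℕ × ℕ).1 ∧ (a : ℕ × ℕ).2 < (b : ℕ × ℕ).2) ∨
     ((a : ℕ × ℕ).2 = (b : ℕ × ℕ).2 ∧ (a : ℕ × ℕ).1 < (b : ℕ × ℕ).1)) → T a < T b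

/-- The content of the box of `T` containing the entry `k`: column index minus row index. -/
def tabContent {μ : YoungDiagram} {d : ℕ} (T : ↥μ.cells ≃ Fin d) (k : Fin d) : ℤ :=
  ((T.symm k : ℕ × ℕ).2 : ℤ) - ((T.symm k : ℕ × ℕ).1 : ℤ)

lemma standard_mono {μ : YoungDiagram} {d : ℕ} (T : ↥μ.cells ≃ Fin d)
    (hT : IsStandardFilling T) (a b : ↥μ.cells)
    (h1 : (a : ℕ × ℕ).1 ≤ (b : ℕ × ℕ).1) (h2 : (a : ℕ × ℕ).2 ≤ (b : ℕ × ℕ).2)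
    (hne : (a : ℕ × ℕ) ≠ (b : ℕ × ℕ)) : T a < T b := by
  rcases lt_or_eq_of_le h1 with h1' | h1'
  · rcases lt_or_eq_of_le h2 with h2' | h2'
    · have hbmem : ((b : ℕ × ℕ).1, (b : ℕ × ℕ).2) ∈ μ := by
        have := b.2
        rw [YoungDiagram.mem_cells] at this
        exact this
      have hmem : ((a : ℕ × ℕ).1, (b : ℕ × ℕ).2) ∈ μ :=
        μ.up_left_mem (le_of_lt h1') le_rfl hbmem
      set c : ↥μ.cells := ⟨((a : ℕ × ℕ).1, (b : ℕ × ℕ).2), (μ.mem_cells _).2 hmem⟩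
      have hac : T a < T c := hT a c (Or.inl ⟨rfl, h2'⟩)
      have hcb : T c < T b := hT c b (Or.inr ⟨rfl, h1'⟩)
      exact hac.trans hcb
    · exact hT a b (Or.inr ⟨h2', h1'⟩)
  · rcases lt_or_eq_of_le h2 with h2' | h2'
    · exact hT a b (Or.inl ⟨h1', h2'⟩)
    · exact absurd (Prod.ext h1' h2') hne

/-- The content vector determines a standard tableau: two standard tableaux of size `d`
(possibly of a priori different shapes) with equal content vectors coincide: the shapes are
equal and the entries occupy the same boxes. -/
theorem content_vector_determines_standard_tableau
    (μ ν : YoungDiagram) (d : ℕ)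
    (T : ↥μ.cells ≃ Fin d) (S : ↥ν.cells ≃ Fin d)
    (hT : IsStandardFilling T) (hS : IsStandardFilling S)
    (hc : ∀ k : Fin d, tabContent T k = tabContent S k) :
    μ = ν ∧ ∀ k : Fin d, (T.symm k : ℕ × ℕ) = (S.symm k : ℕ × ℕ) := by
  have key : ∀ n : ℕ, ∀ k : Fin d, (k : ℕ) = n →
      (T.symm k : ℕ × ℕ) = (S.symm k : ℕ × ℕ) := by
    intro n
    induction n using Nat.strong_induction_on with
    | _ n ih =>
      intro k hk
      set a := T.symm k with ha
      set b := S.symm k with hb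
      have hcont : ((a : ℕ × ℕ).2 : ℤ) - ((a : ℕ × ℕ).1 : ℤ) =
          ((b : ℕ × ℕ).2 : ℤ) - ((b : ℕ × ℕ).1 : ℤ) := hc k
      rcases lt_trichotomy (a : ℕ × ℕ).1 (b : ℕ × ℕ).1 with h | h | h
      · -- box a lies in ν; its S-entry m is < k; contradiction.
        exfalso
        have h2 : (a : ℕ × ℕ).2 < (b : ℕ × ℕ).2 := by omega
        have hbmem : ((b : ℕ × ℕ).1, (b : ℕ × ℕ).2) ∈ ν := by
          have := b.2; rw [YoungDiagram.mem_cells] at this; exact this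
        have hmem : ((a : ℕ × ℕ).1, (a : ℕ × ℕ).2) ∈ ν :=
          ν.up_left_mem (le_of_lt h) (le_of_lt h2) hbmem
        set c : ↥ν.cells := ⟨((a : ℕ × ℕ).1, (a : ℕ × ℕ).2), (ν.mem_cells _).2 hmem⟩
        have hne : (c : ℕ × ℕ) ≠ (b : ℕ × ℕ) := by
          intro hcb
          have := congrArg Prod.fst hcb
          simp [c] at this; omega
        have hlt : S c < S b := standard_mono S hS c b (le_of_lt h) (le_of_lt h2) hne
        have hSb : S b = k := by rw [hb]; exact S.apply_symm_apply k
        set m := S c with hm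
        have hmk : (m : ℕ) < n := by rw [← hk, ← hSb]; exact hlt
        have hIH : (T.symm m : ℕ × ℕ) = (S.symm m : ℕ × ℕ) := ih m hmk m rfl
        have hSm : S.symm m = c := by rw [hm]; exact S.symm_apply_apply c
        have hTm : (T.symm m : ℕ × ℕ) = (a : ℕ × ℕ) := by
          rw [hIH, hSm]
        have : T.symm m = T.symm k := by
          apply Subtype.ext; rw [hTm, ha]
        have hmk2 : m = k := T.symm.injective this
        rw [hmk2] at hmk; omega
      · -- same row, hence same box
        have h2 : (a : ℕ × ℕ).2 = (b : ℕ × ℕ).2 := by omega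
        exact Prod.ext h h2
      · -- symmetric case
        exfalso
        have h2 : (b : ℕ × ℕ).2 < (a : ℕ × ℕ).2 := by omega
        have hamem : ((a : ℕ × ℕ).1, (a : ℕ × ℕ).2) ∈ μ := by
          have := a.2; rw [YoungDiagram.mem_cells] at this; exact this
        have hmem : ((b : ℕ × ℕ).1, (b : ℕ × ℕ).2) ∈ μ :=
          μ.up_left_mem (le_of_lt h) (le_of_lt h2) hamem
        set c : ↥μ.cells := ⟨((b : ℕ × ℕ).1, (b : ℕ × ℕ).2), (μ.mem_cells _).2 hmem⟩
        have hne : (c : ℕ × ℕ) ≠ (a : ℕ × ℕ) := by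
          intro hca
          have := congrArg Prod.fst hca
          simp [c] at this; omega
        have hlt : T c < T a := standard_mono T hT c a (le_of_lt h) (le_of_lt h2) hne
        have hTa : T a = k := by rw [ha]; exact T.apply_symm_apply k
        set m := T c with hm
        have hmk : (m : ℕ) < n := by rw [← hk, ← hTa]; exact hlt
        have hIH : (T.symm m : ℕ × ℕ) = (S.symm m : ℕ × ℕ) := ih m hmk m rfl
        have hTm : T.symm m = c := by rw [hm]; exact T.symm_apply_apply c
        have hSm : (S.symm m : ℕ × ℕ) = (b : ℕ × ℕ) := by
          rw [← hIH, hTm]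
        have : S.symm m = S.symm k := by
          apply Subtype.ext; rw [hSm, hb]
        have hmk2 : m = k := S.symm.injective this
        rw [hmk2] at hmk; omega
  have key' : ∀ k : Fin d, (T.symm k : ℕ × ℕ) = (S.symm k : ℕ × ℕ) :=
    fun k => key k k rfl
  refine ⟨?_, key'⟩
  ext p
  constructor
  · intro hp
    have hpc : p ∈ μ.cells := (μ.mem_cells p).2 hp
    have h := key' (T ⟨p, hpc⟩)
    rw [T.symm_apply_apply] at h
    have := (S.symm (T ⟨p, hpc⟩)).2
    rw [YoungDiagram.mem_cells] at this
    rw [← h] at this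
    exact this
  · intro hp
    have hpc : p ∈ ν.cells := (ν.mem_cells p).2 hp
    have h := key' (S ⟨p, hpc⟩)
    rw [S.symm_apply_apply] at h
    have := (T.symm (S ⟨p, hpc⟩)).2
    rw [YoungDiagram.mem_cells] at this
    rw [h] at this
    exact this
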